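/- arXiv:1211.4140 — 2 statements merged into one kernel-verified Lean document; each statement's English description precedes it below -/
import Mathlib

section
/- Let G be a finite cyclic group and 0 → A → B → C → 0 a short exact sequence of G-modules for which the Herbrand quotients are defined. Then the Herbrand quotient is multiplicative: h(G,B) = h(G,A)·h(G,C), where h(G,M) = |H^2(G,M)|/|H^1(G,M)|. -/
open Finset

section TateCohomology

variable (G : Type*) [Group G] [Fintype G]
variable (M : Type*) [AddCommGroup M] [DistribMulAction G M]

/-- The norm (trace) map `m ↦ Σ_{σ ∈ G} σ • m`. -/
def normMap : M →+ M where
  toFun m := ∑ x : G, x • m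
  map_zero' := by simp
  map_add' a b := by simp [smul_add, Finset.sum_add_distrib]

variable {G}

/-- The map `m ↦ g • m - m`. -/
def augMap (g : G) : M →+ M :=
  DistribMulAction.toAddMonoidHom M g - AddMonoidHom.id M

/-- For a cyclic group `G` with generator `g`, the Tate cohomology group
`Ĥ²(G, M) = Ĥ⁰(G, M) = M^G / N_G M` (fixed points modulo norms). -/
def tateH2 (g : G) : Type _ :=
  (augMap M g).ker ⧸ ((normMap G M).range.addSubgroupOf (augMap M g).ker)

/-- For a cyclic group `G` with generator `g`, the Tate cohomology group
`Ĥ¹(G, M) = ker(N_G) / (g - 1)M`. -/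
def tateH1 (g : G) : Type _ :=
  (normMap G M).ker ⧸ ((augMap M g).range.addSubgroupOf (normMap G M).ker)

end TateCohomology

section NormAug

variable (G : Type*) [Group G] [Fintype G]

lemma aug_norm (M : Type*) [AddCommGroup M] [DistribMulAction G M] (g : G) (m : M) :
    augMap M g (normMap G M m) = 0 := by
  show g • (∑ x : G, x • m) - (∑ x : G, x • m) = 0
  rw [Finset.smul_sum, sub_eq_zero]
  exact Fintype.sum_equiv (Equiv.mulLeft g) (fun x => g • x • m) (fun y => y • m)
    (fun x => by simp [smul_smul])

lemma norm_aug (M : Type*) [AddCommGroup M] [DistribMulAction G M] (g : G) (m : M) :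
    normMap G M (augMap M g m) = 0 := by
  show ∑ x : G, x • (g • m - m) = 0
  simp only [smul_sub]
  rw [Finset.sum_sub_distrib, sub_eq_zero]
  exact Fintype.sum_equiv (Equiv.mulRight g) (fun x => x • g • m) (fun y => y • m)
    (fun x => by simp [smul_smul])

end NormAug


open Finset

section Hex

variable {M : Type*} [AddCommGroup M]

/-- homology-type quotient: ker d / (range n ∩ ker d) -/
abbrev Hq (d n : M →+ M) : Type _ :=
  d.ker ⧸ (n.range.addSubgroupOf d.ker)

instance (d n : M →+ M) : AddCommGroup (Hq d n) :=
  inferInstanceAs (AddCommGroup (_ ⧸ _))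

variable {A B C : Type*} [AddCommGroup A] [AddCommGroup B] [AddCommGroup C]

def kerMap (f : A →+ B) (dA : A →+ A) (dB : B →+ B) (h : ∀ a, f (dA a) = dB (f a)) :
    dA.ker →+ dB.ker :=
  (f.comp dA.ker.subtype).codRestrict dB.ker (fun x => by
    have hx : dA (x : A) = 0 := x.2
    simp [AddMonoidHom.mem_ker, ← h, hx])

@[simp] lemma kerMap_apply (f : A →+ B) (dA : A →+ A) (dB : B →+ B)
    (h : ∀ a, f (dA a) = dB (f a)) (x : dA.ker) :
    (kerMap f dA dB h x : B) = f x := rfl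

def mapHq (f : A →+ B) (dA nA : A →+ A) (dB nB : B →+ B)
    (hd : ∀ a, f (dA a) = dB (f a)) (hn : ∀ a, f (nA a) = nB (f a)) :
    Hq dA nA →+ Hq dB nB :=
  QuotientAddGroup.map _ _ (kerMap f dA dB hd) (by
    rintro x hx
    rw [AddSubgroup.mem_addSubgroupOf] at hx
    rw [AddSubgroup.mem_comap, AddSubgroup.mem_addSubgroupOf]
    obtain ⟨a, ha⟩ := hx
    exact ⟨f a, by rw [← hn, ha]; rfl⟩)

@[simp] lemma mapHq_mk (f : A →+ B) (dA nA : A →+ A) (dB nB : B →+ B)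
    (hd : ∀ a, f (dA a) = dB (f a)) (hn : ∀ a, f (nA a) = nB (f a)) (x : dA.ker) :
    mapHq f dA nA dB nB hd hn (QuotientAddGroup.mk x)
      = QuotientAddGroup.mk (kerMap f dA dB hd x) := rfl

/-- bundled data: a short exact sequence of "2-periodic complexes" -/
structure SESData (A B C : Type*) [AddCommGroup A] [AddCommGroup B] [AddCommGroup C] where
  f : A →+ B
  q : B →+ C
  dA : A →+ A
  nA : A →+ A
  dB : B →+ B
  nB : B →+ B
  dC : C →+ C
  nC : C →+ C
  hinj : Function.Injective f
  hsurj : Function.Surjective q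
  hexact : f.range = q.ker
  hfd : ∀ a, f (dA a) = dB (f a)
  hfn : ∀ a, f (nA a) = nB (f a)
  hqd : ∀ b, q (dB b) = dC (q b)
  hqn : ∀ b, q (nB b) = nC (q b)
  hdnB : ∀ b, dB (nB b) = 0
  hndB : ∀ b, nB (dB b) = 0

variable (E : SESData A B C)

/-- swap the roles of the two differentials -/
def SESData.swap : SESData A B C where
  f := E.f
  q := E.q
  dA := E.nA
  nA := E.dA
  dB := E.nB
  nB := E.dB
  dC := E.nC
  nC := E.dC
  hinj := E.hinj
  hsurj := E.hsurj
  hexact := E.hexact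
  hfd := E.hfn
  hfn := E.hfd
  hqd := E.hqn
  hqn := E.hqd
  hdnB := E.hndB
  hndB := E.hdnB

lemma SESData.delta_mem (b : B) (a : A) (ha : E.f a = E.dB b) : a ∈ E.nA.ker := by
  rw [AddMonoidHom.mem_ker]
  apply E.hinj
  rw [map_zero, E.hfn, ha, E.hndB]

lemma SESData.delta_wd (c : C) (b b' : B) (hb : E.q b = c) (hb' : E.q b' = c)
    (a a' : A) (ha : E.f a = E.dB b) (ha' : E.f a' = E.dB b') :
    a' - a ∈ E.dA.range := by
  have h1 : E.q (b' - b) = 0 := by rw [map_sub, hb, hb', sub_self]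
  have h2 : b' - b ∈ E.f.range := by rw [E.hexact]; exact h1
  obtain ⟨a0, ha0⟩ := h2
  refine ⟨a0, E.hinj ?_⟩
  rw [E.hfd, ha0, map_sub, map_sub, ha, ha']

/-- the connecting map on the level of `dC.ker` -/
noncomputable def SESData.deltaFun (c : E.dC.ker) : Hq E.nA E.dA :=
  have hmem : ∃ a, E.f a = E.dB ((E.hsurj (c : C)).choose) := by
    have h : E.dB ((E.hsurj (c : C)).choose) ∈ E.f.range := by
      rw [E.hexact, AddMonoidHom.mem_ker, E.hqd, (E.hsurj (c : C)).choose_spec]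
      exact c.2
    obtain ⟨a, ha⟩ := h
    exact ⟨a, ha⟩
  QuotientAddGroup.mk ⟨hmem.choose, E.delta_mem _ _ hmem.choose_spec⟩

lemma SESData.deltaFun_eq (c : E.dC.ker) (b : B) (hb : E.q b = (c : C)) (a : A)
    (ha : E.f a = E.dB b) (hm : a ∈ E.nA.ker) :
    E.deltaFun c = QuotientAddGroup.mk ⟨a, hm⟩ := by
  unfold SESData.deltaFun
  rw [QuotientAddGroup.eq, AddSubgroup.mem_addSubgroupOf]
  have hmem : ∃ a', E.f a' = E.dB ((E.hsurj (c : C)).choose) := by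
    have h : E.dB ((E.hsurj (c : C)).choose) ∈ E.f.range := by
      rw [E.hexact, AddMonoidHom.mem_ker, E.hqd, (E.hsurj (c : C)).choose_spec]
      exact c.2
    exact h
  have := E.delta_wd (c : C) _ b (E.hsurj (c : C)).choose_spec hb hmem.choose a
    hmem.choose_spec ha
  simpa [sub_eq_neg_add] using this

/-- the connecting homomorphism `Hq dC nC → Hq nA dA` -/
noncomputable def SESData.delta : Hq E.dC E.nC →+ Hq E.nA E.dA :=
  QuotientAddGroup.lift _
    (AddMonoidHom.mk' E.deltaFun (by
      intro c c'
      obtain ⟨b, hb⟩ := E.hsurj (c : C)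
      obtain ⟨b', hb'⟩ := E.hsurj (c' : C)
      have hmemb : E.dB b ∈ E.f.range := by
        rw [E.hexact, AddMonoidHom.mem_ker, E.hqd, hb]; exact c.2
      have hmemb' : E.dB b' ∈ E.f.range := by
        rw [E.hexact, AddMonoidHom.mem_ker, E.hqd, hb']; exact c'.2
      obtain ⟨a, ha⟩ := hmemb
      obtain ⟨a', ha'⟩ := hmemb'
      rw [E.deltaFun_eq c b hb a ha (E.delta_mem _ _ ha),
        E.deltaFun_eq c' b' hb' a' ha' (E.delta_mem _ _ ha'),
        E.deltaFun_eq (c + c') (b + b') (by rw [map_add, hb, hb']; rfl) (a + a')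
          (by rw [map_add, map_add, ha, ha'])
          (E.delta_mem (b + b') _ (by rw [map_add, map_add, ha, ha']))]
      rfl)) (by
      intro x hx
      rw [AddSubgroup.mem_addSubgroupOf] at hx
      obtain ⟨c0, hc0⟩ := hx
      obtain ⟨b0, hb0⟩ := E.hsurj c0
      have h0 : E.deltaFun x = QuotientAddGroup.mk ⟨0, by simp [AddMonoidHom.mem_ker]⟩ :=
        E.deltaFun_eq x (E.nB b0) (by rw [E.hqn, hb0, hc0]) 0
          (by rw [map_zero, E.hdnB]) _
      rw [AddMonoidHom.mem_ker]
      exact h0)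

@[simp] lemma SESData.delta_mk (c : E.dC.ker) :
    E.delta (QuotientAddGroup.mk c) = E.deltaFun c := rfl



noncomputable def SESData.mapf : Hq E.dA E.nA →+ Hq E.dB E.nB :=
  mapHq E.f E.dA E.nA E.dB E.nB E.hfd E.hfn

noncomputable def SESData.mapq : Hq E.dB E.nB →+ Hq E.dC E.nC :=
  mapHq E.q E.dB E.nB E.dC E.nC E.hqd E.hqn

lemma SESData.comp_fq (y : Hq E.dA E.nA) : E.mapq (E.mapf y) = 0 := by
  induction y using QuotientAddGroup.induction_on with
  | H a =>
    rw [SESData.mapf, SESData.mapq, mapHq_mk, mapHq_mk, QuotientAddGroup.eq_zero_iff,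
      AddSubgroup.mem_addSubgroupOf]
    refine ⟨0, ?_⟩
    have h : E.q (E.f (a : A)) = 0 := by
      have : E.f (a : A) ∈ E.q.ker := by rw [← E.hexact]; exact ⟨a, rfl⟩
      exact this
    simp [h]

lemma SESData.exact_B : E.mapf.range = E.mapq.ker := by
  ext x
  constructor
  · rintro ⟨y, hy⟩
    rw [AddMonoidHom.mem_ker, ← hy]
    exact E.comp_fq y
  · intro hx
    induction x using QuotientAddGroup.induction_on with
    | H b =>
      rw [AddMonoidHom.mem_ker] at hx
      rw [SESData.mapq, mapHq_mk, QuotientAddGroup.eq_zero_iff,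
        AddSubgroup.mem_addSubgroupOf] at hx
      obtain ⟨c, hc⟩ := hx
      obtain ⟨b0, hb0⟩ := E.hsurj c
      have hqb' : E.q ((b : B) - E.nB b0) = 0 := by
        rw [map_sub, E.hqn, hb0]
        simp only [kerMap_apply] at hc
        rw [hc, sub_self]
      have hb' : (b : B) - E.nB b0 ∈ E.f.range := by rw [E.hexact]; exact hqb'
      obtain ⟨a, ha⟩ := hb'
      have haker : a ∈ E.dA.ker := by
        rw [AddMonoidHom.mem_ker]
        apply E.hinj
        rw [map_zero, E.hfd, ha, map_sub, E.hdnB, sub_zero]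
        exact b.2
      refine ⟨QuotientAddGroup.mk ⟨a, haker⟩, ?_⟩
      rw [SESData.mapf, mapHq_mk, QuotientAddGroup.eq]
      rw [AddSubgroup.mem_addSubgroupOf]
      refine ⟨b0, ?_⟩
      push_cast
      rw [kerMap_apply]
      simp only [ha]
      abel

lemma SESData.comp_qd (y : Hq E.dB E.nB) : E.delta (E.mapq y) = 0 := by
  induction y using QuotientAddGroup.induction_on with
  | H b =>
    rw [SESData.mapq, mapHq_mk, SESData.delta_mk]
    have h0 : E.deltaFun (kerMap E.q E.dB E.dC E.hqd b)
        = QuotientAddGroup.mk ⟨0, by simp [AddMonoidHom.mem_ker]⟩ := by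
      refine E.deltaFun_eq _ (b : B) rfl 0 ?_ _
      rw [map_zero]
      have h : E.dB (b : B) = 0 := b.2
      rw [h]
    rw [h0]
    rfl

lemma SESData.exact_C : E.mapq.range = E.delta.ker := by
  ext x
  constructor
  · rintro ⟨y, hy⟩
    rw [AddMonoidHom.mem_ker, ← hy]
    exact E.comp_qd y
  · intro hx
    induction x using QuotientAddGroup.induction_on with
    | H c =>
      rw [AddMonoidHom.mem_ker, SESData.delta_mk] at hx
      obtain ⟨b, hb⟩ := E.hsurj (c : C)
      have hmem : E.dB b ∈ E.f.range := by
        rw [E.hexact, AddMonoidHom.mem_ker, E.hqd, hb]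
        exact c.2
      obtain ⟨a, ha⟩ := hmem
      rw [E.deltaFun_eq c b hb a ha (E.delta_mem _ _ ha), QuotientAddGroup.eq_zero_iff,
        AddSubgroup.mem_addSubgroupOf] at hx
      obtain ⟨a0, ha0⟩ := hx
      have hb'ker : (b : B) - E.f a0 ∈ E.dB.ker := by
        rw [AddMonoidHom.mem_ker, map_sub, ← E.hfd, ha0]
        simp only [ha, sub_self]
      refine ⟨QuotientAddGroup.mk ⟨b - E.f a0, hb'ker⟩, ?_⟩
      rw [SESData.mapq, mapHq_mk]
      congr 1
      ext
      rw [kerMap_apply]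
      have hqf : E.q (E.f a0) = 0 := by
        have : E.f a0 ∈ E.q.ker := by rw [← E.hexact]; exact ⟨a0, rfl⟩
        exact this
      rw [map_sub, hqf, sub_zero, hb]

noncomputable def SESData.mapf' : Hq E.nA E.dA →+ Hq E.nB E.dB :=
  mapHq E.f E.nA E.dA E.nB E.dB E.hfn E.hfd

lemma SESData.swap_mapf : E.swap.mapf = E.mapf' := rfl

lemma SESData.comp_df (y : Hq E.dC E.nC) : E.mapf' (E.delta y) = 0 := by
  induction y using QuotientAddGroup.induction_on with
  | H c =>
    rw [SESData.delta_mk]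
    obtain ⟨b, hb⟩ := E.hsurj (c : C)
    have hmem : E.dB b ∈ E.f.range := by
      rw [E.hexact, AddMonoidHom.mem_ker, E.hqd, hb]
      exact c.2
    obtain ⟨a', ha'⟩ := hmem
    rw [E.deltaFun_eq c b hb a' ha' (E.delta_mem _ _ ha')]
    rw [SESData.mapf', mapHq_mk, QuotientAddGroup.eq_zero_iff,
      AddSubgroup.mem_addSubgroupOf]
    exact ⟨b, by rw [kerMap_apply]; exact ha'.symm⟩

lemma SESData.exact_A : E.delta.range = E.mapf'.ker := by
  ext x
  constructor
  · rintro ⟨y, hy⟩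
    rw [AddMonoidHom.mem_ker, ← hy]
    exact E.comp_df y
  · intro hx
    induction x using QuotientAddGroup.induction_on with
    | H a =>
      rw [AddMonoidHom.mem_ker, SESData.mapf', mapHq_mk, QuotientAddGroup.eq_zero_iff,
        AddSubgroup.mem_addSubgroupOf] at hx
      obtain ⟨b, hb⟩ := hx
      rw [kerMap_apply] at hb
      have hcker : E.q b ∈ E.dC.ker := by
        rw [AddMonoidHom.mem_ker, ← E.hqd]
        show E.q (E.dB b) = 0
        rw [hb]
        have : E.f (a : A) ∈ E.q.ker := by rw [← E.hexact]; exact ⟨a, rfl⟩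
        exact this
      refine ⟨QuotientAddGroup.mk ⟨E.q b, hcker⟩, ?_⟩
      rw [SESData.delta_mk]
      exact E.deltaFun_eq _ b rfl (a : A) hb.symm a.2

lemma card_eq_card_range_mul_card_ker {X Y : Type*} [AddCommGroup X] [AddCommGroup Y]
    (φ : X →+ Y) : Nat.card X = Nat.card φ.range * Nat.card φ.ker := by
  rw [AddSubgroup.card_eq_card_quotient_mul_card_addSubgroup φ.ker]
  congr 1
  exact Nat.card_congr (QuotientAddGroup.quotientKerEquivRange φ).toEquiv

lemma hexCard {G1 G2 G3 G4 G5 G6 : Type*} [AddCommGroup G1] [AddCommGroup G2] [AddCommGroup G3]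
    [AddCommGroup G4] [AddCommGroup G5] [AddCommGroup G6]
    (m1 : G1 →+ G2) (m2 : G2 →+ G3) (m3 : G3 →+ G4) (m4 : G4 →+ G5) (m5 : G5 →+ G6)
    (m6 : G6 →+ G1)
    (e1 : m1.range = m2.ker) (e2 : m2.range = m3.ker) (e3 : m3.range = m4.ker)
    (e4 : m4.range = m5.ker) (e5 : m5.range = m6.ker) (e6 : m6.range = m1.ker) :
    Nat.card G2 * (Nat.card G4 * Nat.card G6) = Nat.card G5 * (Nat.card G1 * Nat.card G3) := by
  rw [card_eq_card_range_mul_card_ker m1, card_eq_card_range_mul_card_ker m2,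
    card_eq_card_range_mul_card_ker m3, card_eq_card_range_mul_card_ker m4,
    card_eq_card_range_mul_card_ker m5, card_eq_card_range_mul_card_ker m6,
    ← e1, ← e2, ← e3, ← e4, ← e5, ← e6]
  ring

end Hex


/-- Multiplicativity of the Herbrand quotient on short exact sequences of modules over a
finite cyclic group: `h(G,B) = h(G,A)·h(G,C)` where `h(G,M) = |Ĥ²(G,M)|/|Ĥ¹(G,M)|`. -/
theorem stmt1 (G : Type*) [Group G] [Fintype G] (g : G)
    (hg : ∀ x : G, x ∈ Subgroup.zpowers g)
    (A B C : Type*) [AddCommGroup A] [AddCommGroup B] [AddCommGroup C]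
    [DistribMulAction G A] [DistribMulAction G B] [DistribMulAction G C]
    (f : A →+ B) (q : B →+ C)
    (hf : ∀ (σ : G) (a : A), f (σ • a) = σ • f a)
    (hq : ∀ (σ : G) (b : B), q (σ • b) = σ • q b)
    (hinj : Function.Injective f) (hsurj : Function.Surjective q)
    (hex : f.range = q.ker)
    (h1A : Finite (tateH1 A g)) (h2A : Finite (tateH2 A g))
    (h1C : Finite (tateH1 C g)) (h2C : Finite (tateH2 C g)) :
    Nat.card (tateH2 B g) * (Nat.card (tateH1 A g) * Nat.card (tateH1 C g))
      = Nat.card (tateH1 B g) * (Nat.card (tateH2 A g) * Nat.card (tateH2 C g)) := by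
  classical
  let E : SESData A B C :=
    { f := f
      q := q
      dA := augMap A g
      nA := normMap G A
      dB := augMap B g
      nB := normMap G B
      dC := augMap C g
      nC := normMap G C
      hinj := hinj
      hsurj := hsurj
      hexact := hex
      hfd := fun a => by
        show f (g • a - a) = g • f a - f a
        rw [map_sub, hf]
      hfn := fun a => by
        show f (∑ x : G, x • a) = ∑ x : G, x • f a
        rw [map_sum]
        exact Finset.sum_congr rfl (fun x _ => hf x a)
      hqd := fun b => by
        show q (g • b - b) = g • q b - q b
        rw [map_sub, hq]
      hqn := fun b => by
        show q (∑ x : G, x • b) = ∑ x : G, x • q b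
        rw [map_sum]
        exact Finset.sum_congr rfl (fun x _ => hq x b)
      hdnB := fun b => aug_norm G B g b
      hndB := fun b => norm_aug G B g b }
  have key := hexCard E.mapf E.mapq E.delta E.swap.mapf E.swap.mapq E.swap.delta
    E.exact_B E.exact_C E.exact_A E.swap.exact_B E.swap.exact_C E.swap.exact_A
  exact key
end

section
/- Let G = ⟨g⟩ ≅ Z/(p^n), and give Z_p[ζ_{p^n}] the G-module structure where g acts as multiplication by ζ_{p^n}. For a subgroup N_i = ⟨g^{p^i}⟩ with 0 ≤ i < n, we have H^2(N_i, Z_p[ζ_{p^n}]) = 0 and H^1(N_i, Z_p[ζ_{p^n}]) ≅ Z_p[ζ_{p^n}]/((ζ_{p^n}^{p^i} - 1)) has order p^{p^i}. Consequently χ(N_i, Z_p[ζ_{p^n}]) = -p^i. -/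
open Finset Polynomial

set_option synthInstance.maxHeartbeats 1000000
set_option maxHeartbeats 1000000
set_option maxHeartbeats 8000000

/-- The cyclic group `Z/(p^n)`, written multiplicatively, with canonical generator. -/
abbrev Cyc (p n : ℕ) := Multiplicative (ZMod (p ^ n))

/-- The canonical generator `g` of `Z/(p^n)`. -/
def cycGen (p n : ℕ) : Cyc p n := Multiplicative.ofAdd 1

/-- The group ring `ℤ_p[Z/(p^n)]`. -/
abbrev ZpG (p n : ℕ) [Fact p.Prime] := MonoidAlgebra ℤ_[p] (Cyc p n)

/-- The image of the generator `g` in the group ring. -/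
noncomputable def genElt (p n : ℕ) [Fact p.Prime] : ZpG p n :=
  MonoidAlgebra.of ℤ_[p] (Cyc p n) (cycGen p n)

/-- `ℤ_p[ζ_{p^i}]` realized as `ℤ_pG/(Φ_{p^i}(g))`. -/
noncomputable abbrev ZpZeta (p n i : ℕ) [Fact p.Prime] : Type _ :=
  ZpG p n ⧸ Ideal.span {Polynomial.aeval (genElt p n) (Polynomial.cyclotomic (p ^ i) ℤ_[p])}

section ElementwiseTate

variable (R : Type*) [CommRing R] (M : Type*) [AddCommGroup M] [Module R M]

/-- For the cyclic group generated by (the action of) `a` of order `k`, the Tate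
cohomology group `Ĥ² = Ĥ⁰ = ker(a-1)/im(N)` where `N = 1 + a + ⋯ + a^{k-1}`. -/
@[reducible] noncomputable def H2el (a : R) (k : ℕ) : Type _ :=
  LinearMap.ker (LinearMap.lsmul R M (a - 1)) ⧸
    Submodule.comap (LinearMap.ker (LinearMap.lsmul R M (a - 1))).subtype
      (LinearMap.range (LinearMap.lsmul R M (∑ j ∈ range k, a ^ j)))

/-- For the cyclic group generated by (the action of) `a` of order `k`, the Tate
cohomology group `Ĥ¹ = ker(N)/im(a-1)` where `N = 1 + a + ⋯ + a^{k-1}`. -/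
@[reducible] noncomputable def H1el (a : R) (k : ℕ) : Type _ :=
  LinearMap.ker (LinearMap.lsmul R M (∑ j ∈ range k, a ^ j)) ⧸
    Submodule.comap (LinearMap.ker (LinearMap.lsmul R M (∑ j ∈ range k, a ^ j))).subtype
      (LinearMap.range (LinearMap.lsmul R M (a - 1)))

/-- The `p`-adic Euler characteristic `χ = ord_p(|Ĥ²|/|Ĥ¹|)`. -/
noncomputable def chiEl (p : ℕ) (a : R) (k : ℕ) : ℤ :=
  (padicValNat p (Nat.card (H2el R M a k)) : ℤ) - (padicValNat p (Nat.card (H1el R M a k)) : ℤ)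

end ElementwiseTate

/-! ### Auxiliary material -/

noncomputable abbrev PhiAux (p n : ℕ) [Fact p.Prime] : ℤ_[p][X] := cyclotomic (p ^ n) ℤ_[p]

section Aux
variable (p n i : ℕ) [hp : Fact p.Prime]

omit hp in
lemma cycGen_pow_aux (k : ℕ) : cycGen p n ^ k = Multiplicative.ofAdd (k : ZMod (p ^ n)) := by
  induction k with
  | zero => simp [cycGen]
  | succ k ih =>
      rw [pow_succ, ih, cycGen, ← ofAdd_add]
      push_cast
      rfl

lemma genElt_pow_aux (k : ℕ) :
    genElt p n ^ k = MonoidAlgebra.of ℤ_[p] (Cyc p n) (Multiplicative.ofAdd (k : ZMod (p ^ n))) := by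
  rw [genElt, ← map_pow, cycGen_pow_aux]

lemma genElt_pow_card_aux : genElt p n ^ (p ^ n) = 1 := by
  haveI : NeZero (p ^ n) := ⟨pow_ne_zero n hp.out.pos.ne'⟩
  rw [genElt_pow_aux]
  simp [MonoidAlgebra.one_def]

lemma exists_algEquiv_aux :
    ∃ e : AdjoinRoot ((X : ℤ_[p][X]) ^ (p ^ n) - 1) ≃ₐ[ℤ_[p]] ZpG p n,
      ∀ q : ℤ_[p][X], e (AdjoinRoot.mk _ q) = aeval (genElt p n) q := by
  haveI : NeZero (p ^ n) := ⟨pow_ne_zero n hp.out.pos.ne'⟩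
  set f : ℤ_[p][X] := (X : ℤ_[p][X]) ^ (p ^ n) - 1 with hf
  have hroot : (AdjoinRoot.root f) ^ (p ^ n) = 1 := by
    have := AdjoinRoot.mk_self (f := f)
    rw [hf] at this
    rw [map_sub, map_pow, map_one, AdjoinRoot.mk_X, sub_eq_zero] at this
    exact this
  have hm1 : 1 ≤ p ^ n := Nat.one_le_pow _ _ hp.out.pos
  have hu : (AdjoinRoot.root f) * (AdjoinRoot.root f) ^ (p ^ n - 1) = 1 := by
    rw [← pow_succ', Nat.sub_add_cancel hm1]
    exact hroot
  set u : (AdjoinRoot f)ˣ := Units.mkOfMulEqOne _ _ hu with hudef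
  have huval : (u : AdjoinRoot f) = AdjoinRoot.root f := rfl
  have hupow : u ^ (p ^ n) = 1 := by
    ext
    push_cast [huval]
    exact hroot
  have h0 : (zmultiplesHom (Additive (AdjoinRoot f)ˣ) (Additive.ofMul u)) ((p^n : ℕ) : ℤ) = 0 := by
    simp only [zmultiplesHom_apply, ← ofMul_zpow, zpow_natCast, hupow]
    rfl
  set f1 : ZMod (p ^ n) →+ Additive (AdjoinRoot f)ˣ := ZMod.lift (p ^ n) ⟨_, h0⟩ with hf1
  set hom : Cyc p n →* AdjoinRoot f :=
    (Units.coeHom _).comp (AddMonoidHom.toMultiplicativeLeft f1) with hhom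
  have homval : ∀ k : ℕ, hom (Multiplicative.ofAdd ((k : ZMod (p ^ n)))) = (AdjoinRoot.root f) ^ k := by
    intro k
    have key : f1 ((k : ZMod (p ^ n))) = Additive.ofMul (u ^ k) := by
      have hcast : ((k : ZMod (p^n))) = (((k:ℤ)) : ZMod (p^n)) := by push_cast; rfl
      rw [hf1, hcast, ZMod.lift_coe]
      simp only [zmultiplesHom_apply, ← ofMul_zpow, zpow_natCast]
    simp only [hhom, MonoidHom.comp_apply, Units.coeHom_apply,
      AddMonoidHom.coe_toMultiplicativeLeft, Function.comp_apply]
    rw [show Multiplicative.toAdd (Multiplicative.ofAdd ((k : ZMod (p^n)))) = (k : ZMod (p^n)) from rfl]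
    rw [key, toMul_ofMul, ← huval, Units.val_pow_eq_pow_val]
  set Ψ : ZpG p n →ₐ[ℤ_[p]] AdjoinRoot f := (MonoidAlgebra.lift ℤ_[p] _ (Cyc p n)) hom with hΨ
  have hfg : aeval (genElt p n) f = 0 := by
    rw [hf, map_sub, map_pow, aeval_X, map_one, genElt_pow_card_aux, sub_self]
  set Φh : AdjoinRoot f →ₐ[ℤ_[p]] ZpG p n := AdjoinRoot.liftAlgHom f (Algebra.ofId _ _) (genElt p n)
    (show eval₂ (Algebra.ofId ℤ_[p] (ZpG p n) : ℤ_[p] →+* ZpG p n) (genElt p n) f = 0 from hfg) with hΦh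
  have comp1 : Φh.comp Ψ = AlgHom.id ℤ_[p] (ZpG p n) := by
    apply MonoidAlgebra.algHom_ext
    intro x
    have hz : x = Multiplicative.ofAdd (((Multiplicative.toAdd x).val : ℕ) : ZMod (p^n)) := by
      rw [ZMod.natCast_rightInverse (Multiplicative.toAdd x)]
      rfl
    simp only [AlgHom.coe_comp, Function.comp_apply, AlgHom.coe_id, id_eq]
    have hsingle : (MonoidAlgebra.single x (1:ℤ_[p]))
        = MonoidAlgebra.of ℤ_[p] (Cyc p n) x := rfl
    rw [hsingle, hΨ, MonoidAlgebra.lift_of]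
    rw [hz, homval, map_pow, hΦh, AdjoinRoot.liftAlgHom_root, genElt_pow_aux, ← hz]
    exact Subsingleton.elim _ _
  have comp2 : Ψ.comp Φh = AlgHom.id ℤ_[p] (AdjoinRoot f) := by
    apply AdjoinRoot.algHom_ext
    simp only [AlgHom.coe_comp, Function.comp_apply, AlgHom.coe_id, id_eq]
    rw [hΦh, AdjoinRoot.liftAlgHom_root, hΨ, genElt, MonoidAlgebra.lift_of]
    have h1 : cycGen p n = Multiplicative.ofAdd (((1:ℕ) : ZMod (p^n))) := by
      simp [cycGen]
    rw [h1, homval, pow_one]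
  refine ⟨AlgEquiv.ofAlgHom Φh Ψ comp1 comp2, ?_⟩
  intro q
  show Φh (AdjoinRoot.mk f q) = _
  rw [hΦh, AdjoinRoot.liftAlgHom_mk]
  rfl

lemma powP_sub_one_eq_aux (hn : 1 ≤ n) :
    (X : ℤ_[p][X]) ^ (p ^ n) - 1
      = cyclotomic (p ^ n) ℤ_[p] * ((X : ℤ_[p][X]) ^ (p ^ (n - 1)) - 1) := by
  have := cyclotomic_prime_pow_mul_X_pow_sub_one ℤ_[p] p (n - 1)
  rw [Nat.sub_add_cancel hn] at this
  exact this.symm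

lemma dvdP_pow_sub_one_aux {j : ℕ} (hij : i ≤ j) :
    ((X : ℤ_[p][X]) ^ (p ^ i) - 1) ∣ (X : ℤ_[p][X]) ^ (p ^ j) - 1 := by
  have h := sub_dvd_pow_sub_pow ((X : ℤ_[p][X]) ^ (p ^ i)) 1 (p ^ (j - i))
  rw [one_pow, ← pow_mul, ← pow_add, Nat.add_sub_cancel' hij] at h
  exact h

lemma monicP_aux : ((X : ℤ_[p][X]) ^ (p ^ i) - 1).Monic := by
  have : ((X : ℤ_[p][X]) ^ (p ^ i) - C 1).Monic :=
    monic_X_pow_sub_C 1 (pow_ne_zero i hp.out.pos.ne')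
  simpa using this

lemma cyclotomic_dvd_geom_sum_aux (hi : i < n) :
    cyclotomic (p ^ n) ℤ_[p] ∣ ∑ j ∈ range (p ^ (n - i)), ((X : ℤ_[p][X]) ^ (p ^ i)) ^ j := by
  obtain ⟨t, ht⟩ := dvdP_pow_sub_one_aux p i (Nat.le_sub_one_of_lt hi)
  refine ⟨t, ?_⟩
  have hne : ((X : ℤ_[p][X]) ^ (p ^ i) - 1) ≠ 0 := (monicP_aux p i).ne_zero
  apply mul_right_cancel₀ hne
  rw [geom_sum_mul, ← pow_mul, ← pow_add, Nat.add_sub_cancel' hi.le,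
    powP_sub_one_eq_aux p n (by omega), ht]
  ring

lemma dvd_cyclotomic_sub_C_aux (hn : 1 ≤ n) (hi : i < n) :
    ((X : ℤ_[p][X]) ^ (p ^ i) - 1) ∣ cyclotomic (p ^ n) ℤ_[p] - C (p : ℤ_[p]) := by
  have hn' : n = (n - 1) + 1 := (Nat.sub_add_cancel hn).symm
  have hΦ : cyclotomic (p ^ n) ℤ_[p] = ∑ j ∈ range p, ((X : ℤ_[p][X]) ^ (p ^ (n - 1))) ^ j := by
    rw [hn']
    exact cyclotomic_prime_pow_eq_geom_sum hp.out
  have hC : (C (p : ℤ_[p]) : ℤ_[p][X]) = ∑ _j ∈ range p, (1 : ℤ_[p][X]) := by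
    simp [Finset.sum_const, Finset.card_range, C_eq_natCast]
  rw [hΦ, hC, ← Finset.sum_sub_distrib]
  apply Finset.dvd_sum
  intro j _
  calc ((X : ℤ_[p][X]) ^ (p ^ i) - 1) ∣ (X : ℤ_[p][X]) ^ (p ^ (n-1)) - 1 :=
        dvdP_pow_sub_one_aux p i (Nat.le_sub_one_of_lt hi)
    _ ∣ ((X : ℤ_[p][X]) ^ (p ^ (n-1))) ^ j - 1 := by
        simpa using sub_dvd_pow_sub_pow ((X : ℤ_[p][X]) ^ (p ^ (n-1))) 1 j

lemma cyclotomic_coprime_cancel_aux (hn : 1 ≤ n) (hi : i < n) (h : ℤ_[p][X])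
    (hdvd : cyclotomic (p ^ n) ℤ_[p] ∣ ((X : ℤ_[p][X]) ^ (p ^ i) - 1) * h) :
    cyclotomic (p ^ n) ℤ_[p] ∣ h := by
  set φ : ℤ_[p] →+* ℚ_[p] := PadicInt.Coe.ringHom with hφ
  have hinj : Function.Injective φ := Subtype.coe_injective
  have hsep : ((X : ℚ_[p][X]) ^ (p ^ n) - 1).Separable := by
    have : ((X : ℚ_[p][X]) ^ (p ^ n) - C 1).Separable :=
      separable_X_pow_sub_C (1 : ℚ_[p]) (by
        exact_mod_cast (Nat.cast_ne_zero (R := ℚ_[p])).2 (pow_ne_zero n hp.out.pos.ne')) one_ne_zero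
    simpa using this
  have heq : (X : ℚ_[p][X]) ^ (p ^ n) - 1
      = cyclotomic (p ^ n) ℚ_[p] * ((X : ℚ_[p][X]) ^ (p ^ (n - 1)) - 1) := by
    have := cyclotomic_prime_pow_mul_X_pow_sub_one ℚ_[p] p (n - 1)
    rw [Nat.sub_add_cancel hn] at this
    exact this.symm
  rw [heq] at hsep
  have hcop : IsCoprime (cyclotomic (p ^ n) ℚ_[p]) ((X : ℚ_[p][X]) ^ (p ^ (n - 1)) - 1) :=
    hsep.isCoprime
  have hdvd2 : ((X : ℚ_[p][X]) ^ (p ^ i) - 1) ∣ (X : ℚ_[p][X]) ^ (p ^ (n-1)) - 1 := by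
    have h2 := sub_dvd_pow_sub_pow ((X : ℚ_[p][X]) ^ (p ^ i)) 1 (p ^ (n - 1 - i))
    rw [one_pow, ← pow_mul, ← pow_add, Nat.add_sub_cancel' (Nat.le_sub_one_of_lt hi)] at h2
    exact h2
  have hcop2 : IsCoprime (cyclotomic (p ^ n) ℚ_[p]) ((X : ℚ_[p][X]) ^ (p ^ i) - 1) :=
    hcop.of_isCoprime_of_dvd_right hdvd2
  have hmap : map φ (cyclotomic (p ^ n) ℤ_[p]) ∣ map φ (((X : ℤ_[p][X]) ^ (p ^ i) - 1) * h) :=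
    Polynomial.map_dvd φ hdvd
  rw [Polynomial.map_mul, Polynomial.map_sub, Polynomial.map_pow, map_X, Polynomial.map_one,
    map_cyclotomic] at hmap
  have : cyclotomic (p ^ n) ℚ_[p] ∣ map φ h := hcop2.dvd_of_dvd_mul_left hmap
  rw [← map_cyclotomic _ φ] at this
  exact (map_dvd_map φ hinj (cyclotomic.monic _ _)).1 this

lemma exists_quotEquiv_aux (hn : 1 ≤ n) (A : Type*) [CommRing A] [Algebra ℤ_[p] A] (g : A)
    (e : AdjoinRoot ((X : ℤ_[p][X]) ^ (p ^ n) - 1) ≃ₐ[ℤ_[p]] A)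
    (he : ∀ q : ℤ_[p][X], e (AdjoinRoot.mk _ q) = aeval g q) :
    ∃ E : (ℤ_[p][X] ⧸ Ideal.span {PhiAux p n}) ≃+* (A ⧸ Ideal.span {aeval g (PhiAux p n)}),
      ∀ q : ℤ_[p][X], E (Ideal.Quotient.mk _ q) = Ideal.Quotient.mk _ (aeval g q) := by
  have hdvd : PhiAux p n ∣ (X : ℤ_[p][X]) ^ (p ^ n) - 1 := by
    refine ⟨(X : ℤ_[p][X]) ^ (p ^ (n-1)) - 1, ?_⟩
    have := cyclotomic_prime_pow_mul_X_pow_sub_one ℤ_[p] p (n - 1)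
    rw [Nat.sub_add_cancel hn] at this
    exact this.symm
  have hle : Ideal.span {(X : ℤ_[p][X]) ^ (p ^ n) - 1} ≤ Ideal.span ({PhiAux p n} : Set ℤ_[p][X]) := by
    rw [Ideal.span_le, Set.singleton_subset_iff]
    exact Ideal.mem_span_singleton.2 hdvd
  have hsup : Ideal.span {(X : ℤ_[p][X]) ^ (p ^ n) - 1} ⊔ Ideal.span {PhiAux p n}
      = Ideal.span ({PhiAux p n} : Set ℤ_[p][X]) := sup_eq_right.2 hle
  set step1 := DoubleQuot.quotQuotEquivQuotSup
    (Ideal.span {(X : ℤ_[p][X]) ^ (p ^ n) - 1}) (Ideal.span {PhiAux p n}) with hstep1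
  set step2 := Ideal.quotEquivOfEq hsup with hstep2
  have hIJ : Ideal.span {aeval g (PhiAux p n)}
      = Ideal.map (e.toRingEquiv : AdjoinRoot ((X : ℤ_[p][X]) ^ (p ^ n) - 1) →+* A)
          (Ideal.map (Ideal.Quotient.mk (Ideal.span {(X : ℤ_[p][X]) ^ (p ^ n) - 1}))
            (Ideal.span {PhiAux p n})) := by
    simp only [Ideal.map_span, Set.image_singleton]
    erw [Ideal.map_span, Set.image_singleton]
    congr 1
    show _ = ({e (AdjoinRoot.mk ((X : ℤ_[p][X]) ^ (p ^ n) - 1) (PhiAux p n))} : Set A)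
    rw [he]
  set step3 := Ideal.quotientEquiv (Ideal.map (Ideal.Quotient.mk (Ideal.span {(X : ℤ_[p][X]) ^ (p ^ n) - 1}))
      (Ideal.span {PhiAux p n})) (Ideal.span {aeval g (PhiAux p n)}) e.toRingEquiv hIJ with hstep3
  refine ⟨(step2.symm.trans step1.symm).trans step3, ?_⟩
  intro q
  have h1 : step2.symm (Ideal.Quotient.mk _ q) = Ideal.Quotient.mk _ q := by
    rw [hstep2, Ideal.quotEquivOfEq_symm, Ideal.quotEquivOfEq_mk]
  have h2 : step1.symm (Ideal.Quotient.mk (Ideal.span {(X : ℤ_[p][X]) ^ (p ^ n) - 1}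
        ⊔ Ideal.span {PhiAux p n}) q)
      = DoubleQuot.quotQuotMk (Ideal.span {(X : ℤ_[p][X]) ^ (p ^ n) - 1})
          (Ideal.span {PhiAux p n}) q := by
    rw [hstep1]
    have h := DoubleQuot.quotQuotEquivQuotSup_quotQuotMk
      (I := Ideal.span {(X : ℤ_[p][X]) ^ (p ^ n) - 1})
      (J := Ideal.span ({PhiAux p n} : Set ℤ_[p][X])) q
    rw [← h, RingEquiv.symm_apply_apply]
  have h3 : step3 (DoubleQuot.quotQuotMk (Ideal.span {(X : ℤ_[p][X]) ^ (p ^ n) - 1})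
        (Ideal.span {PhiAux p n}) q)
      = Ideal.Quotient.mk _ (aeval g q) := by
    rw [hstep3]
    have hq := Ideal.quotientEquiv_mk
      (Ideal.map (Ideal.Quotient.mk (Ideal.span {(X : ℤ_[p][X]) ^ (p ^ n) - 1}))
        (Ideal.span {PhiAux p n}))
      (Ideal.span {aeval g (PhiAux p n)}) e.toRingEquiv hIJ
      (Ideal.Quotient.mk (Ideal.span {(X : ℤ_[p][X]) ^ (p ^ n) - 1}) q)
    refine Eq.trans hq ?_
    show Ideal.Quotient.mk _ (e (AdjoinRoot.mk ((X : ℤ_[p][X]) ^ (p ^ n) - 1) q)) = _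
    rw [he]
  simp only [RingEquiv.trans_apply]
  rw [h1, h2, h3]

lemma sup_span_eq_aux (hn : 1 ≤ n) (hi : i < n) :
    Ideal.span {PhiAux p n} ⊔ Ideal.span {(X : ℤ_[p][X]) ^ (p ^ i) - 1}
      = Ideal.span {C (p : ℤ_[p])} ⊔ Ideal.span {(X : ℤ_[p][X]) ^ (p ^ i) - 1} := by
  have hd := dvd_cyclotomic_sub_C_aux p n i hn hi
  apply le_antisymm
  · refine sup_le ?_ le_sup_right
    rw [Ideal.span_le, Set.singleton_subset_iff]
    have : PhiAux p n = C (p : ℤ_[p]) + (PhiAux p n - C (p : ℤ_[p])) := by ring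
    rw [this]
    exact Ideal.add_mem _ (Ideal.mem_sup_left (Ideal.subset_span rfl))
      (Ideal.mem_sup_right (Ideal.mem_span_singleton.2 hd))
  · refine sup_le ?_ le_sup_right
    rw [Ideal.span_le, Set.singleton_subset_iff]
    have : C (p : ℤ_[p]) = PhiAux p n - (PhiAux p n - C (p : ℤ_[p])) := by ring
    rw [this]
    exact Ideal.sub_mem _ (Ideal.mem_sup_left (Ideal.subset_span rfl))
      (Ideal.mem_sup_right (Ideal.mem_span_singleton.2 hd))

lemma card_adjoinRoot_zmod_aux : Nat.card (AdjoinRoot ((X : (ZMod p)[X]) ^ (p ^ i) - 1)) = p ^ p ^ i := by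
  have hm : ((X : (ZMod p)[X]) ^ (p ^ i) - 1).Monic := by
    have := monic_X_pow_sub_C (1 : ZMod p) (pow_ne_zero i hp.out.pos.ne')
    simpa using this
  have hne : ((X : (ZMod p)[X]) ^ (p ^ i) - 1) ≠ 0 := hm.ne_zero
  set pb := AdjoinRoot.powerBasis hne with hpb
  have hdim : pb.dim = p ^ i := by
    rw [hpb, AdjoinRoot.powerBasis_dim]
    have : ((X : (ZMod p)[X]) ^ (p ^ i) - 1) = X ^ (p ^ i) - C 1 := by simp
    rw [this, natDegree_X_pow_sub_C]
  have := Nat.card_congr pb.basis.equivFun.toEquiv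
  rw [this, Nat.card_pi]
  simp only [Nat.card_zmod, Finset.prod_const, Finset.card_univ, Fintype.card_fin, hdim]

lemma card_quot_poly_aux (hn : 1 ≤ n) (hi : i < n) :
    Nat.card (ℤ_[p][X] ⧸ (Ideal.span {PhiAux p n} ⊔ Ideal.span {(X : ℤ_[p][X]) ^ (p ^ i) - 1}))
      = p ^ p ^ i := by
  set Izp : Ideal ℤ_[p] := Ideal.span {(p : ℤ_[p])} with hIzp
  have hCp : Ideal.span ({C (p : ℤ_[p])} : Set ℤ_[p][X]) = Ideal.map C Izp := by
    rw [hIzp, Ideal.map_span, Set.image_singleton]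
  have hsup := sup_span_eq_aux p n i hn hi
  set e0 := Ideal.quotEquivOfEq (hsup.trans (by rw [hCp])) with he0
  set e1 := (DoubleQuot.quotQuotEquivQuotSup (Ideal.map C Izp)
    (Ideal.span {(X : ℤ_[p][X]) ^ (p ^ i) - 1})).symm with he1
  set φ := Ideal.polynomialQuotientEquivQuotientPolynomial Izp with hφ
  have hmapφ : Ideal.map (Ideal.Quotient.mk (Ideal.map C Izp))
        (Ideal.span {(X : ℤ_[p][X]) ^ (p ^ i) - 1})
      = Ideal.map (φ : (ℤ_[p] ⧸ Izp)[X] →+* (ℤ_[p][X] ⧸ Ideal.map C Izp))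
        (Ideal.span {(X : (ℤ_[p] ⧸ Izp)[X]) ^ (p ^ i) - 1}) := by
    simp only [Ideal.map_span, Set.image_singleton]
    congr 1
    rw [Set.singleton_eq_singleton_iff]
    have hX : ((X : (ℤ_[p] ⧸ Izp)[X]) ^ (p ^ i) - 1)
        = ((X : ℤ_[p][X]) ^ (p ^ i) - 1).map (Ideal.Quotient.mk Izp) := by
      simp [Polynomial.map_sub, Polynomial.map_pow, Polynomial.map_one, Polynomial.map_X]
    have hval : (φ : (ℤ_[p] ⧸ Izp)[X] → (ℤ_[p][X] ⧸ Ideal.map C Izp))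
          ((X : (ℤ_[p] ⧸ Izp)[X]) ^ (p ^ i) - 1)
        = Ideal.Quotient.mk (Ideal.map C Izp) ((X : ℤ_[p][X]) ^ (p ^ i) - 1) := by
      rw [hX, hφ]
      exact Ideal.polynomialQuotientEquivQuotientPolynomial_map_mk _ _
    exact hval.symm
  set e2 := (Ideal.quotientEquiv
      (Ideal.span {(X : (ℤ_[p] ⧸ Izp)[X]) ^ (p ^ i) - 1})
      (Ideal.map (Ideal.Quotient.mk (Ideal.map C Izp))
        (Ideal.span {(X : ℤ_[p][X]) ^ (p ^ i) - 1}))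
      φ hmapφ).symm with he2
  have hker : Izp = RingHom.ker (PadicInt.toZMod : ℤ_[p] →+* ZMod p) := by
    rw [PadicInt.ker_toZMod, hIzp, PadicInt.maximalIdeal_eq_span_p]
  set ψ : (ℤ_[p] ⧸ Izp) ≃+* ZMod p :=
    (Ideal.quotEquivOfEq hker).trans
      (RingHom.quotientKerEquivOfSurjective (ZMod.ringHom_surjective _)) with hψ
  have hmapψ : Ideal.span {(X : (ZMod p)[X]) ^ (p ^ i) - 1}
      = Ideal.map ((Polynomial.mapEquiv ψ) : (ℤ_[p] ⧸ Izp)[X] →+* (ZMod p)[X])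
        (Ideal.span {(X : (ℤ_[p] ⧸ Izp)[X]) ^ (p ^ i) - 1}) := by
    simp only [Ideal.map_span, Set.image_singleton]
    congr 1
    rw [Set.singleton_eq_singleton_iff]
    have : (Polynomial.mapEquiv ψ : (ℤ_[p] ⧸ Izp)[X] → (ZMod p)[X])
          ((X : (ℤ_[p] ⧸ Izp)[X]) ^ (p ^ i) - 1) = (X : (ZMod p)[X]) ^ (p ^ i) - 1 := by
      rw [show (Polynomial.mapEquiv ψ : (ℤ_[p] ⧸ Izp)[X] → (ZMod p)[X])
            ((X : (ℤ_[p] ⧸ Izp)[X]) ^ (p ^ i) - 1)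
          = Polynomial.map (ψ : (ℤ_[p] ⧸ Izp) →+* ZMod p)
            ((X : (ℤ_[p] ⧸ Izp)[X]) ^ (p ^ i) - 1) from rfl]
      simp [Polynomial.map_sub, Polynomial.map_pow, Polynomial.map_one, Polynomial.map_X]
    exact this.symm
  set e3 := Ideal.quotientEquiv _ _ (Polynomial.mapEquiv ψ) hmapψ with he3
  have hcong : Nat.card (ℤ_[p][X] ⧸ (Ideal.span {PhiAux p n} ⊔ Ideal.span {(X : ℤ_[p][X]) ^ (p ^ i) - 1}))
      = Nat.card ((ZMod p)[X] ⧸ Ideal.span {(X : (ZMod p)[X]) ^ (p ^ i) - 1}) :=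
    Nat.card_congr ((((e0.trans e1).trans e2).trans e3).toEquiv)
  rw [hcong]
  exact card_adjoinRoot_zmod_aux p i

end Aux

/-- For `N_i = ⟨g^{p^i}⟩ ≤ G = ⟨g⟩ ≅ Z/(p^n)` acting on `ℤ_p[ζ_{p^n}] = ℤ_pG/(Φ_{p^n}(g))`
(so `g` acts as multiplication by `ζ_{p^n}`): `Ĥ²(N_i, ℤ_p[ζ_{p^n}]) = 0`,
`Ĥ¹(N_i, ℤ_p[ζ_{p^n}]) ≅ ℤ_p[ζ_{p^n}]/(ζ_{p^n}^{p^i} - 1)` has order `p^{p^i}`, and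
consequently `χ(N_i, ℤ_p[ζ_{p^n}]) = -p^i`. -/
theorem stmt4 (p n i : ℕ) [Fact p.Prime] (hn : 1 ≤ n) (hi : i < n) :
    Subsingleton (H2el (ZpG p n) (ZpZeta p n n) (genElt p n ^ p ^ i) (p ^ (n - i)))
      ∧ Nonempty (H1el (ZpG p n) (ZpZeta p n n) (genElt p n ^ p ^ i) (p ^ (n - i))
          ≃+ (ZpZeta p n n ⧸
              Ideal.span {(Ideal.Quotient.mk
                (Ideal.span {Polynomial.aeval (genElt p n) (Polynomial.cyclotomic (p ^ n) ℤ_[p])})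
                (genElt p n)) ^ p ^ i - 1}))
      ∧ Nat.card (H1el (ZpG p n) (ZpZeta p n n) (genElt p n ^ p ^ i) (p ^ (n - i))) = p ^ p ^ i
      ∧ chiEl (ZpG p n) (ZpZeta p n n) p (genElt p n ^ p ^ i) (p ^ (n - i)) = -(p ^ i : ℤ) := by
  classical
  have hR : ZpG p n = ZpG p n := rfl
  set g := genElt p n with hg
  set I : Ideal (ZpG p n) := Ideal.span {aeval g (cyclotomic (p ^ n) ℤ_[p])} with hI
  set mkM : ZpG p n →+* ZpZeta p n n := Ideal.Quotient.mk I with hmkM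
  set a : ZpG p n := g ^ p ^ i with ha
  set k : ℕ := p ^ (n - i) with hk
  -- smul lemma
  have hsmul : ∀ (r : ZpG p n) (x : ZpZeta p n n), r • x = mkM r * x := by
    intro r x
    obtain ⟨y, rfl⟩ := Ideal.Quotient.mk_surjective x
    calc r • (Ideal.Quotient.mk I) y = r • Submodule.Quotient.mk y := by
          rw [Ideal.Quotient.mk_eq_mk]
      _ = Submodule.Quotient.mk (r • y) := (Submodule.Quotient.mk_smul I r y).symm
      _ = (Ideal.Quotient.mk I) (r * y) := by rw [smul_eq_mul, Ideal.Quotient.mk_eq_mk]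
      _ = mkM r * (Ideal.Quotient.mk I) y := by rw [hmkM, map_mul]
  -- N = 0 in M
  have hNpoly : (∑ j ∈ range k, a ^ j) = aeval g (∑ j ∈ range k, ((X : ℤ_[p][X]) ^ (p ^ i)) ^ j) := by
    rw [map_sum]
    refine Finset.sum_congr rfl fun j _ => ?_
    rw [ha, map_pow, map_pow, aeval_X]
  have hNmem : (∑ j ∈ range k, a ^ j) ∈ I := by
    rw [hNpoly, hI]
    refine Ideal.mem_span_singleton.2 ?_
    exact _root_.map_dvd (aeval g) (cyclotomic_dvd_geom_sum_aux p n i hi)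
  have hNzero : mkM (∑ j ∈ range k, a ^ j) = 0 := Ideal.Quotient.eq_zero_iff_mem.2 hNmem
  -- get the polynomial model
  obtain ⟨e, he⟩ := exists_algEquiv_aux p n
  obtain ⟨E, hE⟩ := exists_quotEquiv_aux p n hn (ZpG p n) (genElt p n) e he
  -- note : the target of E is exactly M (since PhiAux p n = cyclotomic (p^n) ℤ_[p])
  -- injectivity of multiplication by (mk (X^{p^i} - 1)) on the polynomial side
  have hinjP : ∀ y : (ℤ_[p][X] ⧸ Ideal.span {PhiAux p n}),
      (Ideal.Quotient.mk (Ideal.span {PhiAux p n}) ((X : ℤ_[p][X]) ^ (p ^ i) - 1)) * y = 0 → y = 0 := by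
    intro y hy
    obtain ⟨h, rfl⟩ := Ideal.Quotient.mk_surjective y
    rw [← map_mul] at hy
    have := Ideal.Quotient.eq_zero_iff_mem.1 hy
    rw [Ideal.mem_span_singleton] at this
    have hdvd := cyclotomic_coprime_cancel_aux p n i hn hi h this
    exact Ideal.Quotient.eq_zero_iff_mem.2 (Ideal.mem_span_singleton.2 hdvd)
  -- transfer to M
  have hamk : mkM (a - 1) = E (Ideal.Quotient.mk (Ideal.span {PhiAux p n}) ((X : ℤ_[p][X]) ^ (p ^ i) - 1)) := by
    rw [hE]
    congr 1
    rw [map_sub, map_pow, aeval_X, map_one, ha, hg]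
  have hinjM : ∀ x : ZpZeta p n n, mkM (a - 1) * x = 0 → x = 0 := by
    intro x hx
    obtain ⟨y, rfl⟩ := E.surjective x
    rw [hamk, ← map_mul] at hx
    have h0 : (Ideal.Quotient.mk (Ideal.span {PhiAux p n}) ((X : ℤ_[p][X]) ^ (p ^ i) - 1)) * y = 0 :=
      E.injective (by rw [hx, map_zero])
    rw [hinjP y h0, map_zero]
  -- kernel computations
  have hker_top : LinearMap.ker (LinearMap.lsmul (ZpG p n) (ZpZeta p n n) (∑ j ∈ range k, a ^ j)) = ⊤ := by
    rw [LinearMap.ker_eq_top]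
    refine LinearMap.ext fun x => ?_
    rw [LinearMap.lsmul_apply, hsmul, hNzero, zero_mul, LinearMap.zero_apply]
  have hker_bot : LinearMap.ker (LinearMap.lsmul (ZpG p n) (ZpZeta p n n) (a - 1)) = ⊥ := by
    rw [LinearMap.ker_eq_bot']
    intro x hx
    rw [LinearMap.lsmul_apply, hsmul] at hx
    exact hinjM x hx
  -- H2 : subsingleton
  haveI hsubK : Subsingleton (LinearMap.ker (LinearMap.lsmul (ZpG p n) (ZpZeta p n n) (a - 1))) := by
    constructor
    rintro ⟨x, hx⟩ ⟨y, hy⟩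
    rw [hker_bot, Submodule.mem_bot] at hx hy
    exact Subtype.ext (hx.trans hy.symm)
  haveI hsubH2 : Subsingleton (H2el (ZpG p n) (ZpZeta p n n) a k) := by
    constructor
    intro x y
    obtain ⟨x', rfl⟩ := Submodule.Quotient.mk_surjective _ x
    obtain ⟨y', rfl⟩ := Submodule.Quotient.mk_surjective _ y
    exact congrArg _ (Subsingleton.elim x' y')
  -- the ideal J in M
  set ζ : ZpZeta p n n := mkM g with hζ
  set J : Ideal (ZpZeta p n n) := Ideal.span {ζ ^ p ^ i - 1} with hJ
  have hζa : ζ ^ p ^ i - 1 = mkM (a - 1) := by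
    rw [hζ, ha, map_sub, map_pow, map_one]
  -- range identification
  have hrange : LinearMap.range (LinearMap.lsmul (ZpG p n) (ZpZeta p n n) (a - 1))
      = Submodule.restrictScalars (ZpG p n) J := by
    ext x
    simp only [LinearMap.mem_range, LinearMap.lsmul_apply, Submodule.restrictScalars_mem]
    rw [hJ, Ideal.mem_span_singleton]
    constructor
    · rintro ⟨y, rfl⟩
      exact ⟨y, by rw [hsmul, hζa]⟩
    · rintro ⟨c, rfl⟩
      exact ⟨c, by rw [hsmul, hζa]⟩
  -- the H1 equivalence
  set K := LinearMap.ker (LinearMap.lsmul (ZpG p n) (ZpZeta p n n) (∑ j ∈ range k, a ^ j)) with hK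
  set f : K ≃ₗ[ZpG p n] ZpZeta p n n := LinearEquiv.ofTop K hker_top with hfdef
  have hmapf : (Submodule.comap K.subtype
        (LinearMap.range (LinearMap.lsmul (ZpG p n) (ZpZeta p n n) (a - 1)))).map (f : K →ₗ[ZpG p n] ZpZeta p n n)
      = LinearMap.range (LinearMap.lsmul (ZpG p n) (ZpZeta p n n) (a - 1)) := by
    ext x
    constructor
    · rintro ⟨⟨v, hv⟩, hvmem, rfl⟩
      exact hvmem
    · intro hx
      refine ⟨⟨x, by rw [hker_top]; trivial⟩, hx, rfl⟩
  have hmapf2 : (Submodule.comap K.subtype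
        (LinearMap.range (LinearMap.lsmul (ZpG p n) (ZpZeta p n n) (a - 1)))).map
          (f : K →ₗ[ZpG p n] ZpZeta p n n)
      = Submodule.restrictScalars (ZpG p n) J := by
    rw [hmapf, hrange]
  set eq1 := Submodule.Quotient.equiv
    (Submodule.comap K.subtype (LinearMap.range (LinearMap.lsmul (ZpG p n) (ZpZeta p n n) (a - 1))))
    (Submodule.restrictScalars (ZpG p n) J) f hmapf2 with heq1
  set eq3 := Submodule.Quotient.restrictScalarsEquiv (ZpG p n) J with heq3
  set finalEquiv : H1el (ZpG p n) (ZpZeta p n n) a k ≃+ (ZpZeta p n n ⧸ J) :=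
    eq1.toAddEquiv.trans eq3.toAddEquiv with hfinal
  -- cardinality of M ⧸ J
  have hJE : J = Ideal.map (E : (ℤ_[p][X] ⧸ Ideal.span {PhiAux p n}) →+* ZpZeta p n n)
      (Ideal.span {Ideal.Quotient.mk (Ideal.span {PhiAux p n}) ((X : ℤ_[p][X]) ^ (p ^ i) - 1)}) := by
    rw [Ideal.map_span, Set.image_singleton, hJ]
    congr 1
    rw [Set.singleton_eq_singleton_iff, hζa, hamk]
    rfl
  set c1 := Ideal.quotientEquiv _ J E hJE with hc1
  have hspan_eq : Ideal.span {Ideal.Quotient.mk (Ideal.span {PhiAux p n}) ((X : ℤ_[p][X]) ^ (p ^ i) - 1)}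
      = Ideal.map (Ideal.Quotient.mk (Ideal.span {PhiAux p n}))
          (Ideal.span {(X : ℤ_[p][X]) ^ (p ^ i) - 1}) := by
    rw [Ideal.map_span, Set.image_singleton]
  set c0 := Ideal.quotEquivOfEq hspan_eq with hc0
  set c2 := DoubleQuot.quotQuotEquivQuotSup (Ideal.span {PhiAux p n})
    (Ideal.span {(X : ℤ_[p][X]) ^ (p ^ i) - 1}) with hc2
  have hcardMJ : Nat.card (ZpZeta p n n ⧸ J) = p ^ p ^ i := by
    have hd1 : Nat.card (ZpZeta p n n ⧸ J)
        = Nat.card ((ℤ_[p][X] ⧸ Ideal.span {PhiAux p n})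
            ⧸ Ideal.span {Ideal.Quotient.mk (Ideal.span {PhiAux p n}) ((X : ℤ_[p][X]) ^ (p ^ i) - 1)}) :=
      Nat.card_congr c1.symm.toEquiv
    have hd2 : Nat.card ((ℤ_[p][X] ⧸ Ideal.span {PhiAux p n})
          ⧸ Ideal.span {Ideal.Quotient.mk (Ideal.span {PhiAux p n}) ((X : ℤ_[p][X]) ^ (p ^ i) - 1)})
        = Nat.card ((ℤ_[p][X] ⧸ Ideal.span {PhiAux p n})
            ⧸ Ideal.map (Ideal.Quotient.mk (Ideal.span {PhiAux p n}))
                (Ideal.span {(X : ℤ_[p][X]) ^ (p ^ i) - 1})) :=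
      Nat.card_congr c0.toEquiv
    have hd3 : Nat.card ((ℤ_[p][X] ⧸ Ideal.span {PhiAux p n})
          ⧸ Ideal.map (Ideal.Quotient.mk (Ideal.span {PhiAux p n}))
              (Ideal.span {(X : ℤ_[p][X]) ^ (p ^ i) - 1}))
        = Nat.card (ℤ_[p][X] ⧸ (Ideal.span {PhiAux p n} ⊔ Ideal.span {(X : ℤ_[p][X]) ^ (p ^ i) - 1})) :=
      Nat.card_congr c2.toEquiv
    rw [hd1, hd2, hd3]
    exact card_quot_poly_aux p n i hn hi
  have hcardH1 : Nat.card (H1el (ZpG p n) (ZpZeta p n n) a k) = p ^ p ^ i := by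
    rw [Nat.card_congr finalEquiv.toEquiv, hcardMJ]
  have hcardH2 : Nat.card (H2el (ZpG p n) (ZpZeta p n n) a k) = 1 := by
    rw [Nat.card_eq_one_iff_unique]
    exact ⟨hsubH2, ⟨0⟩⟩
  refine ⟨hsubH2, ⟨finalEquiv⟩, hcardH1, ?_⟩
  rw [chiEl, hcardH1, hcardH2]
  rw [padicValNat.one, padicValNat.prime_pow]
  push_cast
  ring
end
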